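/- Let M ⊆ ℤ be a nonempty integer interval and let (λ_k)_{k∈M}, (μ_k)_{k∈M} be interlaced real sequences with no finite accumulation point such that Σ_{k∈M}(μ_k − λ_k) = Δ < ∞. Then for every nonreal ζ the infinite product F(ζ) := ∏_{k∈M} (μ_k − ζ)/(λ_k − ζ) converges (is multipliable), and for every ε > 0 one has F(ζ) → 1 as |ζ| → ∞ with ζ restricted to the region {ζ ∈ ℂ : Im ζ ≥ ε}. -/

import Mathlib

open Filter Topology

lemma aux_finset_prod_sub_one {ι : Type*} (f : ι → ℂ) (s : Finset ι) :
    ‖(∏ i ∈ s, f i) - 1‖ ≤ Real.exp (∑ i ∈ s, ‖f i - 1‖) - 1 := by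
  induction s using Finset.cons_induction with
  | empty => simp
  | cons j s hj ih =>
    rw [Finset.prod_cons, Finset.sum_cons]
    set P := ∏ i ∈ s, f i with hP
    set A := ∑ i ∈ s, ‖f i - 1‖ with hA
    have hPn : ‖P‖ ≤ Real.exp A := by
      have : ‖P‖ ≤ ‖P - 1‖ + 1 := by
        calc ‖P‖ = ‖(P - 1) + 1‖ := by ring_nf
        _ ≤ ‖P - 1‖ + ‖(1:ℂ)‖ := norm_add_le _ _
        _ = ‖P - 1‖ + 1 := by simp
      linarith
    have h1 : f j * P - 1 = (P - 1) + (f j - 1) * P := by ring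
    have hA0 : 0 ≤ A := Finset.sum_nonneg fun i _ => norm_nonneg _
    calc ‖f j * P - 1‖ = ‖(P - 1) + (f j - 1) * P‖ := by rw [h1]
      _ ≤ ‖P - 1‖ + ‖f j - 1‖ * ‖P‖ := by
          refine (norm_add_le _ _).trans ?_
          rw [norm_mul]
      _ ≤ (Real.exp A - 1) + ‖f j - 1‖ * Real.exp A := by
          have := norm_nonneg (f j - 1)
          gcongr
      _ ≤ Real.exp (‖f j - 1‖ + A) - 1 := by
          rw [Real.exp_add]
          nlinarith [Real.add_one_le_exp ‖f j - 1‖, Real.exp_pos A,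
            norm_nonneg (f j - 1)]

lemma aux_multipliable_tprod {ι : Type*} (f : ι → ℂ) (hne : ∀ i, f i ≠ 0)
    (h : Summable fun i => ‖f i - 1‖) :
    Multipliable f ∧ ‖(∏' i, f i) - 1‖ ≤ Real.exp (∑' i, ‖f i - 1‖) - 1 := by
  have hlog : Summable fun i => Complex.log (f i) := by
    apply Summable.of_norm_bounded_eventually
      (h.mul_left (3/2))
    have : ∀ᶠ i in cofinite, ‖f i - 1‖ ≤ 1/2 := by
      have := h.tendsto_cofinite_zero
      have h2 : ∀ᶠ x in 𝓝 (0:ℝ), x ≤ 1/2 :=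
        eventually_le_nhds (by norm_num)
      filter_upwards [this.eventually h2] with i hi using hi
    filter_upwards [this] with i hi
    have := Complex.norm_log_one_add_half_le_self (z := f i - 1) (by simpa using hi)
    simpa using this
  have hm : Multipliable f := by
    have := Complex.multipliable_of_summable_log hlog
    exact this
  refine ⟨hm, ?_⟩
  have hp : Tendsto (fun s : Finset ι => ∏ i ∈ s, f i) atTop (𝓝 (∏' i, f i)) :=
    hm.hasProd
  have hcont : Tendsto (fun s : Finset ι => ‖(∏ i ∈ s, f i) - 1‖) atTop
      (𝓝 ‖(∏' i, f i) - 1‖) :=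
    ((hp.sub tendsto_const_nhds).norm)
  refine le_of_tendsto hcont (Eventually.of_forall fun s => ?_)
  refine (aux_finset_prod_sub_one f s).trans ?_
  have := Summable.sum_le_tsum s (fun i _ => norm_nonneg (f i - 1)) h
  gcongr

/-- For interlaced sequences on an integer interval with summable gaps,
the product F(ζ) = ∏_{k∈M} (μ_k − ζ)/(λ_k − ζ) is multipliable for every nonreal ζ,
and F(ζ) → 1 as |ζ| → ∞ in each region {Im ζ ≥ ε}, ε > 0. -/
theorem two_spectra_prod_tendsto_one
    (M : Set ℤ) (hM : M.Nonempty)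
    (hMint : ∀ a b c : ℤ, a ∈ M → c ∈ M → a ≤ b → b ≤ c → b ∈ M)
    (lam mu : ℤ → ℝ)
    (hinter₁ : ∀ k ∈ M, lam k < mu k)
    (hinter₂ : ∀ k : ℤ, k ∈ M → k + 1 ∈ M → mu k < lam (k + 1))
    (hacc : ∀ R : ℝ, 0 < R → {k ∈ M | |lam k| ≤ R}.Finite)
    (Δ : ℝ)
    (hsum : HasSum (fun k : M => mu (k : ℤ) - lam (k : ℤ)) Δ) :
    (∀ ζ : ℂ, ζ.im ≠ 0 →
        Multipliable (fun k : M => ((mu (k : ℤ) : ℂ) - ζ) / ((lam (k : ℤ) : ℂ) - ζ))) ∧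
    ∀ ε : ℝ, 0 < ε →
      Tendsto (fun ζ : ℂ => ∏' k : M, ((mu (k : ℤ) : ℂ) - ζ) / ((lam (k : ℤ) : ℂ) - ζ))
        (Filter.comap (fun ζ : ℂ => ‖ζ‖) Filter.atTop ⊓
          Filter.principal {ζ : ℂ | ε ≤ ζ.im})
        (𝓝 1) := by
  set g : ℂ → M → ℂ := fun ζ k => ((mu (k : ℤ) : ℂ) - ζ) / ((lam (k : ℤ) : ℂ) - ζ)
    with hg
  have hgap : ∀ k : M, 0 ≤ mu (k : ℤ) - lam (k : ℤ) :=
    fun k => le_of_lt (sub_pos.mpr (hinter₁ k k.2))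
  -- basic facts for nonreal ζ
  have hden : ∀ (ζ : ℂ) (k : M), ζ.im ≠ 0 → ((lam (k : ℤ) : ℂ) - ζ) ≠ 0 := by
    intro ζ k him h
    apply him
    have := congrArg Complex.im h
    simpa using this.symm
  have hnum : ∀ (ζ : ℂ) (k : M), ζ.im ≠ 0 → ((mu (k : ℤ) : ℂ) - ζ) ≠ 0 := by
    intro ζ k him h
    apply him
    have := congrArg Complex.im h
    simpa using this.symm
  have hkey : ∀ (ζ : ℂ) (k : M), ζ.im ≠ 0 →
      g ζ k - 1 = ((mu (k : ℤ) - lam (k : ℤ) : ℝ) : ℂ) / ((lam (k : ℤ) : ℂ) - ζ) := by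
    intro ζ k him
    have hd := hden ζ k him
    simp only [hg]
    field_simp
    push_cast
    ring
  have hnormkey : ∀ (ζ : ℂ) (k : M), ζ.im ≠ 0 →
      ‖g ζ k - 1‖ = (mu (k : ℤ) - lam (k : ℤ)) / ‖(lam (k : ℤ) : ℂ) - ζ‖ := by
    intro ζ k him
    rw [hkey ζ k him, norm_div, Complex.norm_real, Real.norm_eq_abs,
      abs_of_nonneg (hgap k)]
  have hdenlb : ∀ (ζ : ℂ) (k : M), |ζ.im| ≤ ‖(lam (k : ℤ) : ℂ) - ζ‖ := by
    intro ζ k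
    have := Complex.abs_im_le_norm ((lam (k : ℤ) : ℂ) - ζ)
    simpa [Complex.sub_im] using this
  have hsummable : ∀ (ζ : ℂ), ζ.im ≠ 0 → Summable (fun k : M => ‖g ζ k - 1‖) := by
    intro ζ him
    refine (hsum.summable.div_const |ζ.im|).of_nonneg_of_le
      (fun k => norm_nonneg _) (fun k => ?_)
    rw [hnormkey ζ k him]
    have h0 : 0 < |ζ.im| := abs_pos.mpr him
    exact div_le_div_of_nonneg_left (hgap k) h0 (hdenlb ζ k)
  have hmult : ∀ ζ : ℂ, ζ.im ≠ 0 → Multipliable (g ζ) ∧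
      ‖(∏' k, g ζ k) - 1‖ ≤ Real.exp (∑' k, ‖g ζ k - 1‖) - 1 := fun ζ him =>
    aux_multipliable_tprod (g ζ)
      (fun k => div_ne_zero (hnum ζ k him) (hden ζ k him)) (hsummable ζ him)
  refine ⟨fun ζ him => (hmult ζ him).1, ?_⟩
  intro ε hε
  set l := comap (fun ζ : ℂ => ‖ζ‖) atTop ⊓ 𝓟 {ζ : ℂ | ε ≤ ζ.im} with hl
  have h_im : ∀ᶠ ζ in l, ε ≤ ζ.im := by
    rw [hl, eventually_inf_principal]
    exact Eventually.of_forall fun ζ h => h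
  have h_norm : Tendsto (fun ζ : ℂ => ‖ζ‖) l atTop :=
    tendsto_comap.mono_left inf_le_left
  set S : ℂ → ℝ := fun ζ => ∑' k : M, (mu (k : ℤ) - lam (k : ℤ)) / ‖(lam (k : ℤ) : ℂ) - ζ‖
    with hSdef
  have hS : Tendsto S l (𝓝 0) := by
    have h0 : (0:ℝ) = ∑' _k : M, (0:ℝ) := by simp
    rw [h0]
    apply tendsto_tsum_of_dominated_convergence
      (bound := fun k : M => (mu (k : ℤ) - lam (k : ℤ)) / ε)
      (hsum.summable.div_const ε)
    · intro k
      have hd : Tendsto (fun ζ : ℂ => ‖(lam (k : ℤ) : ℂ) - ζ‖) l atTop := by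
        apply tendsto_atTop_mono (f := fun ζ : ℂ => ‖ζ‖ + (-‖(lam (k : ℤ) : ℂ)‖))
        · intro ζ
          have := norm_sub_norm_le ζ ((lam (k : ℤ) : ℂ))
          rw [norm_sub_rev] at this
          linarith
        · exact tendsto_atTop_add_const_right _ _ h_norm
      exact Tendsto.div_atTop tendsto_const_nhds hd
    · filter_upwards [h_im] with ζ hζ
      intro k
      have hlb : ε ≤ ‖(lam (k : ℤ) : ℂ) - ζ‖ := by
        refine le_trans ?_ (hdenlb ζ k)
        exact le_trans hζ (le_abs_self _)
      have h1 : (0:ℝ) ≤ (mu (k : ℤ) - lam (k : ℤ)) / ‖(lam (k : ℤ) : ℂ) - ζ‖ :=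
        div_nonneg (hgap k) (norm_nonneg _)
      rw [Real.norm_eq_abs, abs_of_nonneg h1]
      exact div_le_div_of_nonneg_left (hgap k) hε hlb
  have hexp : Tendsto (fun ζ : ℂ => Real.exp (S ζ) - 1) l (𝓝 0) := by
    have := ((Real.continuous_exp.tendsto 0).comp hS).sub
      (tendsto_const_nhds (x := (1:ℝ)))
    simpa using this
  rw [tendsto_iff_norm_sub_tendsto_zero]
  apply squeeze_zero' (Eventually.of_forall fun ζ => norm_nonneg _) _ hexp
  filter_upwards [h_im] with ζ hζ
  have him : ζ.im ≠ 0 := ne_of_gt (lt_of_lt_of_le hε hζ)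
  refine ((hmult ζ him).2).trans ?_
  have : ∑' k : M, ‖g ζ k - 1‖ = S ζ := tsum_congr fun k => hnormkey ζ k him
  rw [this]
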